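/- Let α be a real number and (c_n)_{n≥1} a sequence of positive integers, with a_n, A_n the data of the generalized alternating-Sylvester expansion of α. For every n ≥ 1 with A_n ≠ 0, one has A_{n+1} < 1/(a_n + 1). -/

import Mathlib

open Filter Topology

/-- The rational value `c/⌊c/x⌋` used at each step (0 if `x = 0`). -/
noncomputable def gasQaux (cn : ℕ) (x : ℝ) : ℝ :=
  if x = 0 then 0 else (cn : ℝ) / (⌊(cn : ℝ) / x⌋ : ℝ)

/-- `gasA c α n` is `A_n` of the generalized alternating-Sylvester expansion of `α`
(for `n ≥ 1`; the value at `0` is a dummy). `A_1 = α - ⌊α⌋`, `A_{n+1} = q_n - A_n`. -/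
noncomputable def gasA (c : ℕ → ℕ) (α : ℝ) : ℕ → ℝ
  | 0 => 0
  | 1 => α - ⌊α⌋
  | n + 2 => gasQaux (c (n + 1)) (gasA c α (n + 1)) - gasA c α (n + 1)

/-- `gasQ c α n` is `q_n`: `q_0 = ⌊α⌋`; for `n ≥ 1`, `q_n = c_n / a_n` if `A_n ≠ 0`, else `0`. -/
noncomputable def gasQ (c : ℕ → ℕ) (α : ℝ) : ℕ → ℝ
  | 0 => (⌊α⌋ : ℤ)
  | n + 1 => gasQaux (c (n + 1)) (gasA c α (n + 1))

/-- `gasa c α n` is `a_n = ⌊c_n / A_n⌋` (meaningful when `A_n ≠ 0`). -/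
noncomputable def gasa (c : ℕ → ℕ) (α : ℝ) (n : ℕ) : ℤ :=
  ⌊(c n : ℝ) / gasA c α n⌋

lemma gas_step (cn : ℕ) (hcn : 0 < cn) (A : ℝ) (hA0 : 0 < A) (hA1 : A < 1) :
    0 ≤ gasQaux cn A - A ∧
      gasQaux cn A - A < 1 / ((⌊(cn : ℝ) / A⌋ : ℝ) + 1) ∧
      1 ≤ ⌊(cn : ℝ) / A⌋ := by
  have hcn1 : (1 : ℝ) ≤ (cn : ℝ) := by exact_mod_cast hcn
  set a : ℤ := ⌊(cn : ℝ) / A⌋ with ha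
  have h1 : (a : ℝ) ≤ (cn : ℝ) / A := Int.floor_le _
  have h2 : (cn : ℝ) / A < (a : ℝ) + 1 := Int.lt_floor_add_one _
  have hca : (cn : ℝ) ≤ (a : ℝ) := by
    have : (cn : ℝ) ≤ (cn : ℝ) / A := by
      rw [le_div_iff₀ hA0]; nlinarith
    exact_mod_cast Int.le_floor.2 (by exact_mod_cast this)
  have hapos : (0 : ℝ) < (a : ℝ) := by linarith
  have hq : gasQaux cn A = (cn : ℝ) / (a : ℝ) := by
    rw [gasQaux, if_neg hA0.ne']
  have h2' : (cn : ℝ) < A * ((a : ℝ) + 1) := by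
    rw [div_lt_iff₀ hA0] at h2; linarith
  have h1' : A * (a : ℝ) ≤ (cn : ℝ) := by
    rw [le_div_iff₀ hA0] at h1; linarith
  refine ⟨?_, ?_, ?_⟩
  · rw [hq, sub_nonneg, le_div_iff₀ hapos]; linarith
  · rw [hq, sub_lt_iff_lt_add, div_lt_iff₀ hapos]
    have hinv : (1 / ((a:ℝ) + 1) + A) * a = a / (a + 1) + A * a := by
      field_simp
    rw [hinv]
    have : (cn : ℝ) * ((a:ℝ)+1) < (a:ℝ) + A * (a:ℝ) * ((a:ℝ)+1) := by nlinarith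
    have hb : (0:ℝ) < (a:ℝ) + 1 := by linarith
    rw [div_add' _ _ _ hb.ne', lt_div_iff₀ hb]; nlinarith
  · exact_mod_cast (by exact_mod_cast le_trans hcn1 hca : (1:ℝ) ≤ (a:ℝ))

lemma gasA_mem (c : ℕ → ℕ) (hc : ∀ n, 1 ≤ n → 0 < c n) (α : ℝ) :
    ∀ n, 1 ≤ n → 0 ≤ gasA c α n ∧ gasA c α n < 1 := by
  intro n
  induction n with
  | zero => omega
  | succ m ih =>
    intro _
    match m, ih with
    | 0, _ =>
      simp only [gasA]
      exact ⟨by simpa using Int.fract_nonneg α, by simpa using Int.fract_lt_one α⟩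
    | k + 1, ih =>
      obtain ⟨h0, h1⟩ := ih (by omega)
      show 0 ≤ gasQaux (c (k+1)) (gasA c α (k+1)) - gasA c α (k+1) ∧
        gasQaux (c (k+1)) (gasA c α (k+1)) - gasA c α (k+1) < 1
      rcases eq_or_lt_of_le h0 with h | h
      · rw [← h, gasQaux, if_pos rfl]; norm_num
      · obtain ⟨hs0, hs1, hs2⟩ := gas_step (c (k+1)) (hc (k+1) (by omega)) _ h h1
        have ha : (1:ℝ) ≤ ((⌊((c (k+1) : ℕ) : ℝ) / gasA c α (k+1)⌋ : ℤ) : ℝ) := by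
          exact_mod_cast hs2
        refine ⟨hs0, lt_of_lt_of_le hs1 ?_⟩
        rw [div_le_one (by linarith)]; linarith

/-- For every $n \ge 1$ with $A_n \neq 0$, $A_{n+1} < 1/(a_n + 1)$. -/
theorem gas_An_succ_lt (c : ℕ → ℕ) (hc : ∀ n, 1 ≤ n → 0 < c n) (α : ℝ) :
    ∀ n, 1 ≤ n → gasA c α n ≠ 0 →
      gasA c α (n + 1) < 1 / ((gasa c α n : ℝ) + 1) := by
  intro n hn hne
  obtain ⟨m, rfl⟩ : ∃ m, n = m + 1 := ⟨n - 1, by omega⟩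
  obtain ⟨h0, h1⟩ := gasA_mem c hc α (m + 1) (by omega)
  have hpos : 0 < gasA c α (m + 1) := lt_of_le_of_ne h0 (Ne.symm hne)
  obtain ⟨_, hs1, _⟩ := gas_step (c (m+1)) (hc (m+1) (by omega)) _ hpos h1
  exact hs1
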